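/- Let π be a strict ranking of m indivisible goods among n agents, and suppose every agent's additive utility function induces π (i.e., agents rank goods identically and strictly). Then an allocation A = (A_1,…,A_n) is SD-EF1 with respect to these utilities if and only if for every agent i and every block index ℓ ∈ {1,…,⌈m/n⌉}, agent i receives at most one good whose rank under π lies in {nℓ−n+1,…,nℓ}. -/

import Mathlib

open Finset

namespace SdEf1Aux

variable {m : ℕ} {M : Type*} [Fintype M] [DecidableEq M]

/-- number of goods in `S` with rank `< t`. -/
def cnt (π : M ≃ Fin m) (S : Finset M) (t : ℕ) : ℕ :=
  (S.filter (fun x => (π x : ℕ) < t)).card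

lemma cnt_mono (π : M ≃ Fin m) (S : Finset M) {t t' : ℕ} (h : t ≤ t') :
    cnt π S t ≤ cnt π S t' := by
  apply Finset.card_le_card
  apply Finset.monotone_filter_right
  intro x _ hx
  exact lt_of_lt_of_le hx h

lemma cnt_subset (π : M ≃ Fin m) {S S' : Finset M} (h : S ⊆ S') (t : ℕ) :
    cnt π S t ≤ cnt π S' t :=
  Finset.card_le_card (Finset.filter_subset_filter _ h)

lemma cnt_univ (π : M ≃ Fin m) (t : ℕ) : cnt π Finset.univ t = min t m := by
  unfold cnt
  rw [← Finset.card_range (min t m)]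
  apply Finset.card_bij (fun g _ => (π g : ℕ))
  · intro a ha
    simp only [mem_filter, mem_univ, true_and] at ha
    simp only [Finset.mem_range, lt_min_iff]
    exact ⟨ha, (π a).isLt⟩
  · intro a _ b _ hab
    exact π.injective (Fin.val_injective hab)
  · intro b hb
    simp only [Finset.mem_range, lt_min_iff] at hb
    refine ⟨π.symm ⟨b, hb.2⟩, ?_, ?_⟩
    · simp only [mem_filter, mem_univ, true_and, Equiv.apply_symm_apply]
      exact hb.1
    · simp

lemma sum_cnt {n : ℕ} (π : M ≃ Fin m) (A : Fin n → Finset M)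
    (hpart : ∀ g : M, ∃! i, g ∈ A i) (t : ℕ) :
    ∑ j, cnt π (A j) t = min t m := by
  classical
  rw [← cnt_univ π t]
  unfold cnt
  rw [← Finset.card_biUnion]
  · congr 1
    ext g
    simp only [mem_biUnion, mem_univ, true_and, mem_filter]
    constructor
    · rintro ⟨j, hj, hlt⟩
      exact hlt
    · intro hlt
      obtain ⟨j, hj, -⟩ := hpart g
      exact ⟨j, hj, hlt⟩

  · intro i _ j _ hij
    rw [Function.onFun, Finset.disjoint_left]
    intro g hgi hgj
    obtain ⟨w, hw, huniq⟩ := hpart g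
    exact hij ((huniq i (mem_filter.mp hgi).1).trans (huniq j (mem_filter.mp hgj).1).symm)

lemma pigeon {n k : ℕ} (s : Fin n → ℕ) (hsum : ∑ j, s j = n * k)
    (hle : ∀ j, s j ≤ k) : ∀ j, s j = k := by
  intro j
  by_contra hj
  have hlt : s j < k := lt_of_le_of_ne (hle j) hj
  have h2 : ∑ j, s j < ∑ _j : Fin n, k :=
    Finset.sum_lt_sum (fun i _ => hle i) ⟨j, Finset.mem_univ j, hlt⟩
  rw [Finset.sum_const, Finset.card_univ, Fintype.card_fin, smul_eq_mul, hsum] at h2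
  exact lt_irrefl _ h2

end SdEf1Aux

open SdEf1Aux

/-- An allocation of indivisible goods among `n` agents whose additive utilities
all induce a common strict ranking `π` is SD-EF1 with respect to these
utilities iff every agent receives at most one good from each consecutive
block of `n` goods of the ranking. -/
theorem stmt_0 {n m : ℕ} (hn : 0 < n) {M : Type*} [Fintype M] [DecidableEq M]
    (π : M ≃ Fin m) (u : Fin n → M → ℝ)
    (hind : ∀ i (g g' : M), (π g : ℕ) < (π g' : ℕ) ↔ u i g' < u i g)
    (A : Fin n → Finset M)
    (hpart : ∀ g : M, ∃! i, g ∈ A i) :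
    (∀ i j, A j = ∅ ∨ ∃ g ∈ A j, ∀ h : M,
        (((A j).erase g).filter (fun x => u i h ≤ u i x)).card ≤
          ((A i).filter (fun x => u i h ≤ u i x)).card)
    ↔ (∀ i, ∀ ℓ ∈ Finset.Icc 1 ((m + n - 1) / n),
        ((A i).filter (fun g =>
          n * ℓ - n + 1 ≤ (π g : ℕ) + 1 ∧ (π g : ℕ) + 1 ≤ n * ℓ)).card ≤ 1) := by
  classical
  -- the filter by utility is the filter by rank
  have hkey : ∀ (i : Fin n) (h : M) (S : Finset M),
      (S.filter (fun x => u i h ≤ u i x)).card = cnt π S ((π h : ℕ) + 1) := by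
    intro i h S
    unfold cnt
    congr 1
    apply Finset.filter_congr
    intro x _
    rw [Nat.lt_succ_iff]
    constructor
    · intro hu
      by_contra hlt
      push_neg at hlt
      exact absurd ((hind i h x).mp hlt) (not_lt.mpr hu)
    · intro hle
      by_contra hu
      push_neg at hu
      exact absurd ((hind i h x).mpr hu) (not_lt.mpr hle)
  -- number of goods of agent j in block b (blocks indexed from 0)
  have hBcong : ∀ (i : Fin n) (b : ℕ),
      ((A i).filter (fun g =>
          n * (b + 1) - n + 1 ≤ (π g : ℕ) + 1 ∧ (π g : ℕ) + 1 ≤ n * (b + 1))).card =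
      ((A i).filter (fun g => n * b ≤ (π g : ℕ) ∧ (π g : ℕ) < n * b + n)).card := by
    intro i b
    congr 1
    apply Finset.filter_congr
    intro x _
    have e : n * (b + 1) = n * b + n := by ring
    rw [e]
    omega
  -- upper bound on `cnt` from per-block bounds
  have hub : ∀ (j : Fin n) (k : ℕ),
      (∀ b < k, ((A j).filter (fun g => n * b ≤ (π g : ℕ) ∧ (π g : ℕ) < n * b + n)).card ≤ 1) →
      cnt π (A j) (n * k) ≤ k := by
    intro j k hb1
    have hsub : (A j).filter (fun x => (π x : ℕ) < n * k) ⊆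
        (Finset.range k).biUnion
          (fun b => (A j).filter (fun g => n * b ≤ (π g : ℕ) ∧ (π g : ℕ) < n * b + n)) := by
      intro x hx
      simp only [mem_filter, mem_biUnion, Finset.mem_range] at hx ⊢
      have hdm := Nat.div_add_mod (π x : ℕ) n
      have hmod : (π x : ℕ) % n < n := Nat.mod_lt _ hn
      refine ⟨(π x : ℕ) / n, ?_, hx.1, by omega, by omega⟩
      have h1 : n * ((π x : ℕ) / n) < n * k := by omega
      exact lt_of_mul_lt_mul_left h1 (Nat.zero_le n)
    calc cnt π (A j) (n * k) ≤ ((Finset.range k).biUnion _).card :=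
          Finset.card_le_card hsub
      _ ≤ ∑ b ∈ Finset.range k,
            ((A j).filter (fun g => n * b ≤ (π g : ℕ) ∧ (π g : ℕ) < n * b + n)).card :=
          Finset.card_biUnion_le
      _ ≤ ∑ _b ∈ Finset.range k, 1 := Finset.sum_le_sum (fun b hb =>
            hb1 b (Finset.mem_range.mp hb))
      _ = k := by simp
  -- exact count of top `n*k` goods when they all exist
  have hfull : ∀ (k : ℕ), n * k ≤ m →
      (∀ j, cnt π (A j) (n * k) ≤ k) → ∀ j, cnt π (A j) (n * k) = k := by
    intro k hkm hle
    apply pigeon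
    · rw [sum_cnt π A hpart, min_eq_left hkm]
    · exact hle
  constructor
  · -- SD-EF1 → block condition
    intro H
    by_contra hcon
    push_neg at hcon
    -- a violated block (0-indexed) exists
    have hQ : ∃ b : ℕ, ∃ i, n * b < m ∧
        2 ≤ ((A i).filter (fun g => n * b ≤ (π g : ℕ) ∧ (π g : ℕ) < n * b + n)).card := by
      obtain ⟨i, ℓ, hℓ, hcard⟩ := hcon
      simp only [Finset.mem_Icc] at hℓ
      obtain ⟨b, rfl⟩ : ∃ b, ℓ = b + 1 := ⟨ℓ - 1, by omega⟩
      refine ⟨b, i, ?_, ?_⟩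
      · have := (Nat.le_div_iff_mul_le hn).mp hℓ.2
        have e : (b + 1) * n = n * b + n := by ring
        omega
      · rw [← hBcong]; omega
    -- take the minimal violated block
    obtain ⟨i, hbm, hcard⟩ := Nat.find_spec hQ
    set b := Nat.find hQ with hbdef
    have hmin : ∀ b' < b, ∀ j,
        ((A j).filter (fun g => n * b' ≤ (π g : ℕ) ∧ (π g : ℕ) < n * b' + n)).card ≤ 1 := by
      intro b' hb' j
      by_contra hj
      exact Nat.find_min hQ hb' ⟨j, by
        have : n * b' < n * b := (Nat.mul_lt_mul_left hn).mpr hb'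
        omega, by omega⟩
    -- two goods of agent i in block b
    obtain ⟨g1, hg1, g2, hg2, hne⟩ := Finset.one_lt_card.mp hcard
    simp only [mem_filter] at hg1 hg2
    -- the threshold
    set T : ℕ := max (π g1 : ℕ) (π g2 : ℕ) + 1 with hTdef
    have hTm : T ≤ m := by
      have := (π g1).isLt
      have := (π g2).isLt
      omega
    have hTub : T ≤ n * b + n := by omega
    -- every agent owns exactly b goods of rank < n*b
    have hdfull : ∀ j, cnt π (A j) (n * b) = b :=
      hfull b (le_of_lt hbm) (fun j => hub j b (fun b' hb' => hmin b' hb' j))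
    -- agent i owns at least b+2 goods of rank < T
    have hci : b + 2 ≤ cnt π (A i) T := by
      have hsub : insert g1 (insert g2 ((A i).filter (fun x => (π x : ℕ) < n * b))) ⊆
          (A i).filter (fun x => (π x : ℕ) < T) := by
        intro x hx
        simp only [Finset.mem_insert, mem_filter] at hx ⊢
        rcases hx with rfl | rfl | ⟨hx, hlt⟩
        · exact ⟨hg1.1, by omega⟩
        · exact ⟨hg2.1, by omega⟩
        · exact ⟨hx, by omega⟩
      have hcardins : (insert g1 (insert g2 ((A i).filter (fun x => (π x : ℕ) < n * b)))).card
          = b + 2 := by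
        rw [Finset.card_insert_of_notMem, Finset.card_insert_of_notMem]
        · have := hdfull i
          unfold cnt at this
          omega
        · simp only [mem_filter, not_and]
          intro _
          omega
        · simp only [Finset.mem_insert, mem_filter, not_or, not_and]
          exact ⟨hne, fun _ => by omega⟩
      calc b + 2 = _ := hcardins.symm
        _ ≤ cnt π (A i) T := Finset.card_le_card hsub
    -- every other agent owns at least cnt i - 1 goods of rank < T
    have hcj : ∀ j, b + 1 ≤ cnt π (A j) T := by
      intro j
      by_cases hji : j = i
      · subst hji; omega
      · have hAine : A i ≠ ∅ := by
          intro he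
          rw [he] at hg1
          exact absurd hg1.1 (Finset.notMem_empty g1)
        obtain ⟨g, hg, hdom⟩ := (H j i).resolve_left hAine
        have hm0 : max (π g1 : ℕ) (π g2 : ℕ) < m := by omega
        have hspec := hdom (π.symm ⟨max (π g1 : ℕ) (π g2 : ℕ), hm0⟩)
        rw [hkey, hkey] at hspec
        simp only [Equiv.apply_symm_apply] at hspec
        have herase : cnt π (A i) T - 1 ≤ cnt π ((A i).erase g) T := by
          unfold cnt
          rw [Finset.filter_erase]
          exact Finset.pred_card_le_card_erase
        have : cnt π ((A i).erase g) T ≤ cnt π (A j) T := hspec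
        omega
    -- summing gives a contradiction
    have hstrict : ∑ _j : Fin n, (b + 1) < ∑ j, cnt π (A j) T :=
      Finset.sum_lt_sum (fun j _ => hcj j) ⟨i, Finset.mem_univ i, by omega⟩
    rw [Finset.sum_const, Finset.card_univ, Fintype.card_fin, smul_eq_mul,
      sum_cnt π A hpart, min_eq_left hTm] at hstrict
    have : n * (b + 1) = n * b + n := by ring
    omega
  · -- block condition → SD-EF1
    intro H i j
    by_cases hA : A j = ∅
    · exact Or.inl hA
    right
    -- the per-block bound, valid for every block
    have hb1 : ∀ (p : Fin n) (b : ℕ),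
        ((A p).filter (fun g => n * b ≤ (π g : ℕ) ∧ (π g : ℕ) < n * b + n)).card ≤ 1 := by
      intro p b
      by_cases hbm : n * b < m
      · rw [← hBcong]
        apply H p (b + 1)
        simp only [Finset.mem_Icc]
        refine ⟨by omega, (Nat.le_div_iff_mul_le hn).mpr ?_⟩
        have e : (b + 1) * n = n * b + n := by ring
        omega
      · have : (A p).filter (fun g => n * b ≤ (π g : ℕ) ∧ (π g : ℕ) < n * b + n) = ∅ := by
          apply Finset.filter_false_of_mem
          intro x _
          have := (π x).isLt
          omega
        rw [this]
        simp
    -- pick the best good of A j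
    obtain ⟨g, hg, hgmin⟩ := Finset.exists_min_image (A j) (fun x => (π x : ℕ))
      (Finset.nonempty_of_ne_empty hA)
    refine ⟨g, hg, ?_⟩
    intro h
    rw [hkey, hkey]
    set t : ℕ := (π h : ℕ) with htdef
    have htm : t < m := (π h).isLt
    have hdm := Nat.div_add_mod t n
    have hmod : t % n < n := Nat.mod_lt t hn
    obtain ⟨k, hk1, hk2⟩ : ∃ k, n * k ≤ t ∧ t < n * k + n := ⟨t / n, by omega, by omega⟩
    -- lower bound on agent i's count
    have hfi : k ≤ cnt π (A i) (t + 1) := by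
      have h1 : cnt π (A i) (n * k) = k :=
        hfull k (by omega) (fun p => hub p k (fun b _ => hb1 p b)) i
      calc k = cnt π (A i) (n * k) := h1.symm
        _ ≤ cnt π (A i) (t + 1) := cnt_mono π _ (by omega)
    -- upper bound on the erased bundle's count
    have hfj : cnt π ((A j).erase g) (t + 1) ≤ k := by
      by_cases hex : ∃ x ∈ A j, (π x : ℕ) ≤ t
      · obtain ⟨x, hx, hxt⟩ := hex
        have hgt : (π g : ℕ) ≤ t := le_trans (hgmin x hx) hxt
        have hgmem : g ∈ (A j).filter (fun y => (π y : ℕ) < t + 1) := by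
          simp only [mem_filter]
          exact ⟨hg, by omega⟩
        have hcub : cnt π (A j) (t + 1) ≤ k + 1 := by
          calc cnt π (A j) (t + 1) ≤ cnt π (A j) (n * (k + 1)) :=
                cnt_mono π _ (by
                  have e : n * (k + 1) = n * k + n := by ring
                  omega)
            _ ≤ k + 1 := hub j (k + 1) (fun b _ => hb1 j b)
        have hpos : 1 ≤ cnt π (A j) (t + 1) := by
          unfold cnt
          exact Finset.card_pos.mpr ⟨g, hgmem⟩
        have heq : cnt π ((A j).erase g) (t + 1) = cnt π (A j) (t + 1) - 1 := by
          unfold cnt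
          rw [Finset.filter_erase, Finset.card_erase_of_mem hgmem]
        omega
      · push_neg at hex
        have : ((A j).erase g).filter (fun y => (π y : ℕ) < t + 1) = ∅ := by
          apply Finset.filter_false_of_mem
          intro x hx
          have := hex x (Finset.mem_of_mem_erase hx)
          omega
        unfold cnt
        rw [this]
        simp
    omega
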